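/- Let X and Y be Banach spaces. If (x, y) is a semi SCS point of B_{X ⊕_∞ Y}, then x is a semi SCS point of B_X and y is a semi SCS point of B_Y. -/

import Mathlib

/-- A point `x₀` of the closed unit ball of `Z` is a *semi SCS point* of `B_Z` if for every
`ε > 0` there exist finitely many slices `Sᵢ = {z ∈ B_Z : fᵢ z > ‖fᵢ‖ - δᵢ}` of `B_Z` and convex
weights `λᵢ ≥ 0`, `Σ λᵢ = 1`, such that the convex combination `Σ λᵢ Sᵢ` is contained in
`B(x₀, ε)`. -/
def IsSemiSCSPointOfBall {Z : Type*} [NormedAddCommGroup Z] [NormedSpace ℝ Z] (x : Z) : Prop :=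
  ‖x‖ ≤ 1 ∧ ∀ ε > (0 : ℝ), ∃ (n : ℕ) (lam : Fin n → ℝ) (f : Fin n → (Z →L[ℝ] ℝ))
    (δ : Fin n → ℝ), (∀ i, 0 ≤ lam i) ∧ (∑ i, lam i) = 1 ∧ (∀ i, 0 < δ i) ∧
    ∀ z : Fin n → Z, (∀ i, ‖z i‖ ≤ 1 ∧ f i (z i) > ‖f i‖ - δ i) →
      (∑ i, lam i • z i) ∈ Metric.closedBall x ε

lemma exists_near_opNorm {W : Type*} [NormedAddCommGroup W] [NormedSpace ℝ W]
    (f : W →L[ℝ] ℝ) {d : ℝ} (hd : 0 < d) : ∃ w : W, ‖w‖ ≤ 1 ∧ f w > ‖f‖ - d := by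
  by_cases hf : ‖f‖ - d < 0
  · exact ⟨0, by simp, by simpa using hf⟩
  · obtain ⟨w, hw1, hw2⟩ := f.exists_lt_apply_of_lt_opNorm (show ‖f‖ - d < ‖f‖ by linarith)
    rcases le_or_gt 0 (f w) with hfw | hfw
    · exact ⟨w, hw1.le, by rwa [Real.norm_eq_abs, abs_of_nonneg hfw] at hw2⟩
    · refine ⟨-w, by simpa using hw1.le, ?_⟩
      rw [map_neg]
      rwa [Real.norm_eq_abs, abs_of_neg hfw] at hw2

lemma aux_fst {X Y : Type*} [NormedAddCommGroup X] [NormedSpace ℝ X]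
    [NormedAddCommGroup Y] [NormedSpace ℝ Y] (x : X) (y : Y)
    (h : IsSemiSCSPointOfBall ((WithLp.equiv ⊤ (X × Y)).symm (x, y))) :
    IsSemiSCSPointOfBall x := by
  obtain ⟨h1, h2⟩ := h
  have hnorm_pair : ‖((WithLp.equiv ⊤ (X × Y)).symm (x, y))‖ = max ‖x‖ ‖y‖ := by
    exact WithLp.prod_norm_toLp (x, y)
  constructor
  · rw [hnorm_pair] at h1
    exact le_trans (le_max_left _ _) h1
  · intro ε hε
    obtain ⟨n, lam, f, δ, hlam, hsum, hδ, hslice⟩ := h2 ε hε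
    set J : X →L[ℝ] WithLp ⊤ (X × Y) :=
      ((WithLp.prodContinuousLinearEquiv ⊤ ℝ X Y).symm :
        (X × Y) →L[ℝ] WithLp ⊤ (X × Y)).comp (ContinuousLinearMap.inl ℝ X Y) with hJ
    set K : Y →L[ℝ] WithLp ⊤ (X × Y) :=
      ((WithLp.prodContinuousLinearEquiv ⊤ ℝ X Y).symm :
        (X × Y) →L[ℝ] WithLp ⊤ (X × Y)).comp (ContinuousLinearMap.inr ℝ X Y) with hK
    have hJK : ∀ (a : X) (b : Y), J a + K b = (WithLp.equiv ⊤ (X × Y)).symm (a, b) := by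
      intro a b
      apply (WithLp.equiv ⊤ (X × Y)).injective
      ext <;> simp [hJ, hK]
    have hbound : ∀ i, ‖f i‖ ≤ ‖(f i).comp J‖ + ‖(f i).comp K‖ := by
      intro i
      apply ContinuousLinearMap.opNorm_le_bound _ (by positivity)
      intro u
      obtain ⟨a, b⟩ := u
      have hu : (WithLp.toLp ⊤ (a, b)) = J a + K b := (hJK a b).symm
      have hna : ‖a‖ ≤ ‖(WithLp.toLp ⊤ (a, b))‖ := by
        rw [WithLp.prod_norm_eq_sup]; exact le_max_left _ _
      have hnb : ‖b‖ ≤ ‖(WithLp.toLp ⊤ (a, b))‖ := by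
        rw [WithLp.prod_norm_eq_sup]; exact le_max_right _ _
      calc ‖f i (WithLp.toLp ⊤ (a, b))‖
          = ‖((f i).comp J) a + ((f i).comp K) b‖ := by rw [hu, map_add]; rfl
        _ ≤ ‖((f i).comp J) a‖ + ‖((f i).comp K) b‖ := norm_add_le _ _
        _ ≤ ‖(f i).comp J‖ * ‖a‖ + ‖(f i).comp K‖ * ‖b‖ :=
              add_le_add (ContinuousLinearMap.le_opNorm _ _) (ContinuousLinearMap.le_opNorm _ _)
        _ ≤ ‖(f i).comp J‖ * ‖(WithLp.toLp ⊤ (a, b))‖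
              + ‖(f i).comp K‖ * ‖(WithLp.toLp ⊤ (a, b))‖ :=
              add_le_add (mul_le_mul_of_nonneg_left hna (norm_nonneg _))
                (mul_le_mul_of_nonneg_left hnb (norm_nonneg _))
        _ = (‖(f i).comp J‖ + ‖(f i).comp K‖) * ‖(WithLp.toLp ⊤ (a, b))‖ := by ring
    refine ⟨n, lam, fun i => (f i).comp J, fun i => δ i / 2, hlam, hsum,
      fun i => half_pos (hδ i), ?_⟩
    intro z hz
    choose w hw1 hw2 using fun i => exists_near_opNorm ((f i).comp K) (half_pos (hδ i))
    set v : Fin n → WithLp ⊤ (X × Y) := fun i => J (z i) + K (w i) with hv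
    have key : ∀ i, ‖v i‖ ≤ 1 ∧ f i (v i) > ‖f i‖ - δ i := by
      intro i
      constructor
      · rw [hv]
        simp only
        rw [hJK]; refine (WithLp.prod_norm_toLp _).trans_le ?_
        exact max_le (hz i).1 (hw1 i)
      · have hsplit : f i (v i) = ((f i).comp J) (z i) + ((f i).comp K) (w i) := by
          simp [hv]
        have h1 := (hz i).2
        have h2 := hw2 i
        have := hbound i
        rw [hsplit]; linarith
    have hmem := hslice v key
    rw [Metric.mem_closedBall] at hmem ⊢
    have hsumv : (∑ i, lam i • v i) =
        (WithLp.equiv ⊤ (X × Y)).symm (∑ i, lam i • z i, ∑ i, lam i • w i) := by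
      calc (∑ i, lam i • v i) = ∑ i, (J (lam i • z i) + K (lam i • w i)) := by
            simp [hv, smul_add]
        _ = J (∑ i, lam i • z i) + K (∑ i, lam i • w i) := by
            rw [Finset.sum_add_distrib, ← map_sum, ← map_sum]
        _ = _ := hJK _ _
    have hdist : dist (∑ i, lam i • v i) ((WithLp.equiv ⊤ (X × Y)).symm (x, y)) =
        max (dist (∑ i, lam i • z i) x) (dist (∑ i, lam i • w i) y) := by
      rw [hsumv, WithLp.prod_dist_eq_sup]
      rfl
    rw [hdist] at hmem
    exact le_trans (le_max_left _ _) hmem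

lemma IsSemiSCSPointOfBall.map {Z W : Type*} [NormedAddCommGroup Z] [NormedSpace ℝ Z]
    [NormedAddCommGroup W] [NormedSpace ℝ W] (e : Z ≃ₗᵢ[ℝ] W) {z : Z}
    (h : IsSemiSCSPointOfBall z) : IsSemiSCSPointOfBall (e z) := by
  obtain ⟨h1, h2⟩ := h
  refine ⟨by simpa using h1, fun ε hε => ?_⟩
  obtain ⟨n, lam, f, δ, hlam, hsum, hδ, hslice⟩ := h2 ε hε
  set E : W →L[ℝ] Z := (e.symm.toContinuousLinearEquiv : W →L[ℝ] Z) with hE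
  have hEapp : ∀ w : W, E w = e.symm w := fun w => rfl
  have hEnorm : ∀ i, ‖(f i).comp E‖ = ‖f i‖ := by
    intro i
    apply le_antisymm
    · apply ContinuousLinearMap.opNorm_le_bound _ (norm_nonneg _)
      intro w
      calc ‖((f i).comp E) w‖ = ‖f i (e.symm w)‖ := rfl
        _ ≤ ‖f i‖ * ‖e.symm w‖ := ContinuousLinearMap.le_opNorm _ _
        _ = ‖f i‖ * ‖w‖ := by rw [e.symm.norm_map]
    · apply ContinuousLinearMap.opNorm_le_bound _ (norm_nonneg _)
      intro u
      calc ‖f i u‖ = ‖((f i).comp E) (e u)‖ := by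
            simp [ContinuousLinearMap.comp_apply, hEapp]
        _ ≤ ‖(f i).comp E‖ * ‖e u‖ := ContinuousLinearMap.le_opNorm _ _
        _ = ‖(f i).comp E‖ * ‖u‖ := by rw [e.norm_map]
  refine ⟨n, lam, fun i => (f i).comp E, δ, hlam, hsum, hδ, ?_⟩
  intro zs hzs
  have key : ∀ i, ‖e.symm (zs i)‖ ≤ 1 ∧ f i (e.symm (zs i)) > ‖f i‖ - δ i := by
    intro i
    refine ⟨by rw [e.symm.norm_map]; exact (hzs i).1, ?_⟩
    have := (hzs i).2
    rwa [hEnorm i] at this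
  have hmem := hslice (fun i => e.symm (zs i)) key
  rw [Metric.mem_closedBall] at hmem ⊢
  have : (∑ i, lam i • zs i) = e (∑ i, lam i • e.symm (zs i)) := by
    rw [map_sum]
    congr 1; ext i
    rw [map_smul, e.apply_symm_apply]
  rw [this, e.dist_map]
  exact hmem

noncomputable def swapLI (X Y : Type*) [NormedAddCommGroup X] [NormedSpace ℝ X]
    [NormedAddCommGroup Y] [NormedSpace ℝ Y] :
    WithLp ⊤ (X × Y) ≃ₗᵢ[ℝ] WithLp ⊤ (Y × X) :=
  (WithLp.prodEquivₗᵢ).trans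
    ((⟨LinearEquiv.prodComm ℝ X Y, fun p => by
        simp [Prod.norm_def, max_comm]⟩ : (X × Y) ≃ₗᵢ[ℝ] (Y × X)).trans
      (WithLp.prodEquivₗᵢ).symm)

/-- For Banach spaces `X`, `Y` and `Z = X ⊕_∞ Y` (max norm): if `(x, y)` is a semi SCS point
of `B_Z`, then `x` is a semi SCS point of `B_X` and `y` is a semi SCS point of `B_Y`. -/
theorem isSemiSCSPointOfBall_prod_top
    {X Y : Type*} [NormedAddCommGroup X] [NormedSpace ℝ X] [CompleteSpace X]
    [NormedAddCommGroup Y] [NormedSpace ℝ Y] [CompleteSpace Y] (x : X) (y : Y)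
    (h : IsSemiSCSPointOfBall ((WithLp.equiv ⊤ (X × Y)).symm (x, y))) :
    IsSemiSCSPointOfBall x ∧ IsSemiSCSPointOfBall y := by
  refine ⟨aux_fst x y h, ?_⟩
  have h' : IsSemiSCSPointOfBall ((WithLp.equiv ⊤ (Y × X)).symm (y, x)) := by
    have := h.map (swapLI X Y)
    convert this using 2
    rfl
  exact aux_fst y x h'
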